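/- There are no elements x, y, z of the field ℚ_43 of 43-adic numbers with (x, y, z) ≠ (0, 0, 0) such that 3x^7 + 4y^7 + 5z^7 = 0. -/

import Mathlib

instance : Fact (Nat.Prime 43) := ⟨by norm_num⟩

private def S43 : Finset (ZMod 43) := {0,1,6,7,36,37,42}

private lemma pow7_mem : ∀ a : ZMod 43, a^7 ∈ S43 := by decide

private lemma pow7_zero : ∀ a : ZMod 43, a^7 = 0 → a = 0 := by decide

set_option maxRecDepth 4000 in
private lemma S43_lem : ∀ u ∈ S43, ∀ v ∈ S43, ∀ w ∈ S43,
    3*u+4*v+5*w = 0 → u = 0 ∧ v = 0 ∧ w = 0 := by decide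

private lemma zmod_lem : ∀ a b c : ZMod 43, 3*a^7+4*b^7+5*c^7 = 0 →
    a = 0 ∧ b = 0 ∧ c = 0 := by
  intro a b c h
  obtain ⟨hu, hv, hw⟩ := S43_lem _ (pow7_mem a) _ (pow7_mem b) _ (pow7_mem c) h
  exact ⟨pow7_zero a hu, pow7_zero b hv, pow7_zero c hw⟩

/-- Reduction mod 43: every integral solution has all coordinates divisible by 43. -/
private lemma step (x y z : ℤ_[43]) (h : 3*x^7 + 4*y^7 + 5*z^7 = 0) :
    (43:ℤ_[43]) ∣ x ∧ (43:ℤ_[43]) ∣ y ∧ (43:ℤ_[43]) ∣ z := by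
  have hmap : 3*(PadicInt.toZMod x)^7 + 4*(PadicInt.toZMod y)^7
      + 5*(PadicInt.toZMod z)^7 = 0 := by
    have := congrArg (PadicInt.toZMod (p := 43)) h
    push_cast [map_add, map_mul, map_pow, map_ofNat] at this
    simpa using this
  obtain ⟨ha, hb, hc⟩ := zmod_lem _ _ _ hmap
  have key : ∀ w : ℤ_[43], PadicInt.toZMod w = 0 → (43:ℤ_[43]) ∣ w := by
    intro w hw
    have : w ∈ RingHom.ker (PadicInt.toZMod : ℤ_[43] →+* ZMod 43) := hw
    rw [PadicInt.ker_toZMod, PadicInt.maximalIdeal_eq_span_p,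
      Ideal.mem_span_singleton] at this
    exact_mod_cast this
  exact ⟨key x ha, key y hb, key z hc⟩

private lemma descent : ∀ n : ℕ, ∀ x y z : ℤ_[43],
    3*x^7 + 4*y^7 + 5*z^7 = 0 →
    ‖x‖ ≤ ((43:ℝ)⁻¹)^n ∧ ‖y‖ ≤ ((43:ℝ)⁻¹)^n ∧ ‖z‖ ≤ ((43:ℝ)⁻¹)^n := by
  intro n
  induction n with
  | zero => intro x y z _; simpa using ⟨x.norm_le_one, y.norm_le_one, z.norm_le_one⟩
  | succ n ih =>
    intro x y z h
    obtain ⟨⟨x', hx⟩, ⟨y', hy⟩, ⟨z', hz⟩⟩ := step x y z h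
    subst hx hy hz
    have h43 : ((43:ℤ_[43]))^7 ≠ 0 := by
      apply pow_ne_zero
      have : ((43:ℕ) : ℤ_[43]) ≠ 0 := Nat.cast_ne_zero.2 (by norm_num)
      simpa using this
    have h' : 3*x'^7 + 4*y'^7 + 5*z'^7 = 0 := by
      have : (43:ℤ_[43])^7 * (3*x'^7 + 4*y'^7 + 5*z'^7) = (43:ℤ_[43])^7 * 0 := by
        ring_nf; ring_nf at h; linear_combination h
      exact mul_left_cancel₀ h43 this
    obtain ⟨hx', hy', hz'⟩ := ih x' y' z' h'
    have hn : ‖(43:ℤ_[43])‖ = (43:ℝ)⁻¹ := by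
      have := PadicInt.norm_p (p := 43); exact_mod_cast this
    have fact : ∀ w : ℤ_[43], ‖w‖ ≤ ((43:ℝ)⁻¹)^n → ‖(43:ℤ_[43]) * w‖ ≤ ((43:ℝ)⁻¹)^(n+1) := by
      intro w hw
      rw [norm_mul, hn, pow_succ, mul_comm ((43:ℝ)⁻¹^n)]
      exact mul_le_mul_of_nonneg_left hw (by positivity)
    exact ⟨fact _ hx', fact _ hy', fact _ hz'⟩

private lemma int_sol_zero (x y z : ℤ_[43]) (h : 3*x^7 + 4*y^7 + 5*z^7 = 0) :
    x = 0 ∧ y = 0 ∧ z = 0 := by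
  have lim : Filter.Tendsto (fun n : ℕ => ((43:ℝ)⁻¹)^n) Filter.atTop (nhds 0) :=
    tendsto_pow_atTop_nhds_zero_of_lt_one (by norm_num) (by norm_num)
  have key : ∀ w : ℤ_[43], (∀ n : ℕ, ‖w‖ ≤ ((43:ℝ)⁻¹)^n) → w = 0 := by
    intro w hw
    have : ‖w‖ ≤ 0 := ge_of_tendsto lim (Filter.Eventually.of_forall hw)
    exact norm_le_zero_iff.mp this
  exact ⟨key x fun n => (descent n x y z h).1, key y fun n => (descent n x y z h).2.1,
    key z fun n => (descent n x y z h).2.2⟩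

private lemma exists_scale (a : ℚ_[43]) : ∀ m : ℕ, ∃ n : ℕ, m ≤ n ∧ ‖(43:ℚ_[43])^n * a‖ ≤ 1 := by
  intro m
  have hnorm : ∀ n : ℕ, ‖(43:ℚ_[43])^n * a‖ = ((43:ℝ)⁻¹)^n * ‖a‖ := by
    intro n
    rw [norm_mul, norm_pow]
    congr 2
    exact_mod_cast Padic.norm_p (p := 43)
  have lim : Filter.Tendsto (fun n : ℕ => ((43:ℝ)⁻¹)^n * ‖a‖) Filter.atTop (nhds 0) := by
    simpa using (tendsto_pow_atTop_nhds_zero_of_lt_one (by norm_num : (0:ℝ) ≤ (43:ℝ)⁻¹)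
      (by norm_num)).mul_const ‖a‖
  have : ∀ᶠ n : ℕ in Filter.atTop, ((43:ℝ)⁻¹)^n * ‖a‖ < 1 :=
    lim.eventually_lt_const (by norm_num)
  obtain ⟨n, hmn, hn⟩ := ((this.and (Filter.eventually_ge_atTop m)).exists)
  exact ⟨n, hn, by rw [hnorm]; exact le_of_lt hmn⟩

theorem no_Q43_points_3_4_5 :
    ¬ ∃ x y z : ℚ_[43], (x, y, z) ≠ (0, 0, 0) ∧
      3 * x ^ 7 + 4 * y ^ 7 + 5 * z ^ 7 = 0 := by
  rintro ⟨x, y, z, hne, heq⟩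
  obtain ⟨n₁, -, h₁⟩ := exists_scale x 0
  obtain ⟨n₂, h₁₂, h₂⟩ := exists_scale y n₁
  obtain ⟨n, h₂₃, h₃⟩ := exists_scale z n₂
  have mono : ∀ (a : ℚ_[43]) (j k : ℕ), j ≤ k → ‖(43:ℚ_[43])^j * a‖ ≤ 1 →
      ‖(43:ℚ_[43])^k * a‖ ≤ 1 := by
    intro a j k hjk hja
    have : (43:ℚ_[43])^k * a = (43:ℚ_[43])^(k-j) * ((43:ℚ_[43])^j * a) := by
      rw [← mul_assoc, ← pow_add]
      congr 2
      omega
    rw [this, norm_mul]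
    calc ‖(43:ℚ_[43])^(k-j)‖ * ‖(43:ℚ_[43])^j * a‖
        ≤ 1 * 1 := by
          apply mul_le_mul _ hja (norm_nonneg _) zero_le_one
          rw [norm_pow]
          apply pow_le_one₀ (norm_nonneg _)
          rw [show ‖(43:ℚ_[43])‖ = (43:ℝ)⁻¹ from by exact_mod_cast Padic.norm_p (p := 43)]
          norm_num
      _ = 1 := one_mul 1
  have hx1 : ‖(43:ℚ_[43])^n * x‖ ≤ 1 := mono x n₁ n (le_trans h₁₂ h₂₃) h₁
  have hy1 : ‖(43:ℚ_[43])^n * y‖ ≤ 1 := mono y n₂ n h₂₃ h₂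
  set X : ℤ_[43] := ⟨(43:ℚ_[43])^n * x, hx1⟩
  set Y : ℤ_[43] := ⟨(43:ℚ_[43])^n * y, hy1⟩
  set Z : ℤ_[43] := ⟨(43:ℚ_[43])^n * z, h₃⟩
  have heq' : 3*X^7 + 4*Y^7 + 5*Z^7 = 0 := by
    apply Subtype.ext
    have c3 : ((3:ℤ_[43]):ℚ_[43]) = 3 := rfl
    have c4 : ((4:ℤ_[43]):ℚ_[43]) = 4 := rfl
    have c5 : ((5:ℤ_[43]):ℚ_[43]) = 5 := rfl
    simp only [PadicInt.coe_add, PadicInt.coe_mul, PadicInt.coe_pow, PadicInt.coe_zero]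
    push_cast [X, Y, Z, c3, c4, c5]
    linear_combination ((43:ℚ_[43])^n)^7 * heq
  obtain ⟨hX, hY, hZ⟩ := int_sol_zero X Y Z heq'
  have h43 : ((43:ℚ_[43]))^n ≠ 0 := pow_ne_zero _ (by
    have : ((43:ℕ) : ℚ_[43]) ≠ 0 := Nat.cast_ne_zero.2 (by norm_num)
    simpa using this)
  have hx0 : x = 0 := by
    have : (43:ℚ_[43])^n * x = 0 := congrArg Subtype.val hX
    exact (mul_eq_zero.mp this).resolve_left h43
  have hy0 : y = 0 := by
    have : (43:ℚ_[43])^n * y = 0 := congrArg Subtype.val hY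
    exact (mul_eq_zero.mp this).resolve_left h43
  have hz0 : z = 0 := by
    have : (43:ℚ_[43])^n * z = 0 := congrArg Subtype.val hZ
    exact (mul_eq_zero.mp this).resolve_left h43
  exact hne (by simp [hx0, hy0, hz0])
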